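/- Let T be a tree with positive real edge weights and d the induced weighted shortest-path metric on its vertex set X. Say a finite set x ⊆ X is in general position if no three distinct points of x are equidistant from a common point of X. Then for any finite x ⊆ X in general position, every Delaunay clique of x has cardinality at most two; that is, there do not exist three distinct points y₁, y₂, y₃ ∈ x whose Voronoi cells with respect to x pairwise intersect. -/

import Mathlib

open SimpleGraph Walk List

section Aux
set_option linter.unusedSectionVars false

lemma sum_map_le_of_nodup_subset {α : Type*} (w : α → ℝ) {s l : List α}
    (hs : s.Nodup) (hsub : s ⊆ l) (h0 : ∀ e ∈ l, 0 ≤ w e) :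
    (s.map w).sum ≤ (l.map w).sum := by
  have hle : (s : Multiset α) ≤ (l : Multiset α) :=
    (Multiset.le_iff_subset (by simpa using hs)).mpr (by simpa using hsub)
  obtain ⟨t, ht⟩ := Multiset.le_iff_exists_add.mp hle
  have hts : ∀ e ∈ t, 0 ≤ w e := by
    intro e he
    exact h0 e (by
      have : e ∈ (l : Multiset α) := by rw [ht]; exact Multiset.mem_add.mpr (Or.inr he)
      simpa using this)
  have : ((l : Multiset α).map w).sum = ((s : Multiset α).map w).sum + (t.map w).sum := by
    rw [ht, Multiset.map_add, Multiset.sum_add]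
  have h3 : 0 ≤ (t.map w).sum := Multiset.sum_nonneg (by
    intro x hx; obtain ⟨e, he, rfl⟩ := Multiset.mem_map.mp hx; exact hts e he)
  have hl : ((l : Multiset α).map w).sum = (l.map w).sum := by simp
  have hss : ((s : Multiset α).map w).sum = (s.map w).sum := by simp
  rw [hl, hss] at this
  linarith

variable {V : Type*} {G : SimpleGraph V}

lemma isPath_append_of {a b c : V} {p : G.Walk a b} {q : G.Walk b c}
    (hp : p.IsPath) (hq : q.IsPath) (hmeet : ∀ v ∈ p.support, v ∈ q.support → v = b) :
    (p.append q).IsPath := by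
  rw [Walk.isPath_def, Walk.support_append, List.nodup_append]
  refine ⟨hp.support_nodup, ?_, ?_⟩
  · have := hq.support_nodup
    rw [Walk.support_eq_cons] at this
    exact this.of_cons
  · intro v hv v' hv' hvv
    subst hvv
    have hvb : v = b := hmeet v hv (List.mem_of_mem_tail hv')
    have := hq.support_nodup
    rw [Walk.support_eq_cons] at this
    exact (List.nodup_cons.mp this).1 (hvb ▸ hv')

lemma first_meet {a b : V} (R : G.Walk a b) :
    ∀ L : List V, b ∈ L → ∃ m, m ∈ L ∧ ∃ (R1 : G.Walk a m) (R2 : G.Walk m b),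
      R1.append R2 = R ∧ (∀ v ∈ R1.support, v ∈ L → v = m) := by
  induction R with
  | nil =>
    intro L hb
    exact ⟨_, hb, Walk.nil, Walk.nil, rfl, by intro v hv _; simpa using hv⟩
  | @cons u' v' w' h p ih =>
    intro L hb
    by_cases hu : u' ∈ L
    · exact ⟨u', hu, Walk.nil, Walk.cons h p, rfl, by intro v hv _; simpa using hv⟩
    · obtain ⟨m, hmL, R1, R2, happ, hmeet⟩ := ih L hb
      refine ⟨m, hmL, Walk.cons h R1, R2, by rw [Walk.cons_append, happ], ?_⟩
      intro v hv hvL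
      rw [Walk.support_cons, List.mem_cons] at hv
      rcases hv with rfl | hv
      · exact absurd hvL hu
      · exact hmeet v hv hvL

variable [DecidableEq V] (hT : G.IsTree) (w : Sym2 V → ℝ)
  (hw : ∀ e ∈ G.edgeSet, 0 < w e) (d : V → V → ℝ)
  (hd : ∀ (u v : V) (p : G.Walk u v), p.IsPath → d u v = (p.edges.map w).sum)

include hT w hw d hd in
lemma dsymm (u v : V) : d u v = d v u := by
  obtain ⟨p, hp, -⟩ := hT.existsUnique_path u v
  rw [hd u v p hp, hd v u p.reverse hp.reverse, Walk.edges_reverse, List.map_reverse,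
    List.sum_reverse]

include hT w hw d hd in
lemma dsplit {u v : V} (p : G.Walk u v) (hp : p.IsPath) {m : V} (hm : m ∈ p.support) :
    d u m + d m v = d u v := by
  have huv : d u v = (((p.takeUntil m hm).append (p.dropUntil m hm)).edges.map w).sum :=
    hd u v _ (by rw [Walk.take_spec]; exact hp)
  rw [hd u m (p.takeUntil m hm) (hp.takeUntil hm), hd m v (p.dropUntil m hm) (hp.dropUntil hm),
    huv, Walk.edges_append, List.map_append, List.sum_append]

include hT w hw d hd in
lemma dle_walk {u v : V} (q : G.Walk u v) : d u v ≤ (q.edges.map w).sum := by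
  rw [hd u v q.bypass q.bypass_isPath]
  exact sum_map_le_of_nodup_subset w (q.bypass_isPath.isTrail.edges_nodup)
    q.edges_bypass_subset (fun e he => (hw e (q.edges_subset_edgeSet he)).le)

include hT w hw d hd in
lemma dtri (u m v : V) : d u v ≤ d u m + d m v := by
  obtain ⟨p, hp, -⟩ := hT.existsUnique_path u m
  obtain ⟨q, hq, -⟩ := hT.existsUnique_path m v
  have := dle_walk hT w hw d hd (p.append q)
  rwa [Walk.edges_append, List.map_append, List.sum_append, ← hd u m p hp, ← hd m v q hq] at this

include hT w hw d hd in
lemma median (u v t : V) :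
    ∃ (m : V) (P : G.Walk u v), P.IsPath ∧ m ∈ P.support ∧
      d u m + d m v = d u v ∧ d t m + d m u = d t u ∧ d t m + d m v = d t v := by
  obtain ⟨P, hP, hPuniq⟩ := hT.existsUnique_path u v
  obtain ⟨R, hR, -⟩ := hT.existsUnique_path t u
  obtain ⟨m, hmP, R1, R2, happ, hmeet⟩ := first_meet R P.support P.start_mem_support
  have hR' : (R1.append R2).IsPath := happ ▸ hR
  have hR1 : R1.IsPath := hR'.of_append_left
  have hR2 : R2.IsPath := hR'.of_append_right
  refine ⟨m, P, hP, hmP, dsplit hT w hw d hd P hP hmP, ?_, ?_⟩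
  · rw [hd t u R hR, ← happ, Walk.edges_append, List.map_append, List.sum_append,
      ← hd t m R1 hR1, ← hd m u R2 hR2]
  · have hQ : (R1.append (P.dropUntil m hmP)).IsPath := by
      refine isPath_append_of hR1 (hP.dropUntil hmP) ?_
      intro v' hv' hv''
      exact hmeet v' hv' (Walk.support_dropUntil_subset P hmP hv'')
    have := hd t v (R1.append (P.dropUntil m hmP)) hQ
    rw [Walk.edges_append, List.map_append, List.sum_append, ← hd t m R1 hR1,
      ← hd m v (P.dropUntil m hmP) (hP.dropUntil hmP)] at this
    linarith [this]

include hT w hw d hd in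
lemma dorder {y z : V} (P : G.Walk y z) (hP : P.IsPath) {a b : V}
    (ha : a ∈ P.support) (hb : b ∈ P.support) :
    (d y a + d a b + d b z = d y z) ∨ (d y b + d b a + d a z = d y z) := by
  have hsplit := dsplit hT w hw d hd P hP ha
  rw [← Walk.take_spec P ha, Walk.mem_support_append_iff] at hb
  rcases hb with hb | hb
  · right
    have h1 := dsplit hT w hw d hd (P.takeUntil a ha) (hP.takeUntil ha) hb
    have h2 : d y a = (((P.takeUntil a ha)).edges.map w).sum := hd y a _ (hP.takeUntil ha)
    -- h1 : d y b + d b a = d y a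
    linarith [h1, hsplit]
  · left
    have h1 := dsplit hT w hw d hd (P.dropUntil a ha) (hP.dropUntil ha) hb
    linarith [h1, hsplit]

include hT w hw d hd in
lemma four_point (t x y z : V) :
    d t x + d y z ≤ max (d t y + d x z) (d t z + d x y) := by
  obtain ⟨m1, P1, hP1, hm1, e1, e2, e3⟩ := median hT w hw d hd y z t
  obtain ⟨m2, P2, hP2, hm2, f1, f2, f3⟩ := median hT w hw d hd y z x
  have hPP : P1 = P2 := (hT.existsUnique_path y z).unique hP1 hP2
  subst hPP
  have htri1 : d t x ≤ d t m1 + d m1 x := dtri hT w hw d hd t m1 x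
  have htri2 : d m1 x ≤ d m1 m2 + d m2 x := dtri hT w hw d hd m1 m2 x
  have hs1 : d m2 x = d x m2 := dsymm hT w hw d hd m2 x
  have hs2 : d m2 y = d y m2 := dsymm hT w hw d hd m2 y
  have hs3 : d m1 y = d y m1 := dsymm hT w hw d hd m1 y
  have hs4 : d m1 m2 = d m2 m1 := dsymm hT w hw d hd m1 m2
  rcases dorder hT w hw d hd P1 hP1 hm1 hm2 with hcase | hcase
  · -- d y m1 + d m1 m2 + d m2 z = d y z : bound by  d t z + d x y
    refine le_trans ?_ (le_max_right _ _)
    -- d t z = d t m1 + d m1 z, d x y = d x m2 + d m2 y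
    linarith
  · refine le_trans ?_ (le_max_left _ _)
    linarith

end Aux

/-- Voronoi cell of `y` in the configuration `x` with respect to the distance `d`. -/
def cellD {V : Type*} (d : V → V → ℝ) (x : Finset V) (y : V) : Set V :=
  {ξ | ∀ z ∈ x, d ξ y ≤ d ξ z}

theorem tree_no_three_clique {V : Type*} [Fintype V] (G : SimpleGraph V)
    (hT : G.IsTree) (w : Sym2 V → ℝ) (hw : ∀ e ∈ G.edgeSet, 0 < w e)
    (d : V → V → ℝ)
    (hd : ∀ (u v : V) (p : G.Walk u v), p.IsPath → d u v = (p.edges.map w).sum)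
    (x : Finset V)
    (hgp : ∀ ξ : V, ∀ a ∈ x, ∀ b ∈ x, ∀ c ∈ x, a ≠ b → a ≠ c → b ≠ c →
      ¬(d ξ a = d ξ b ∧ d ξ b = d ξ c)) :
    ¬ ∃ y₁ y₂ y₃ : V, y₁ ∈ x ∧ y₂ ∈ x ∧ y₃ ∈ x ∧ y₁ ≠ y₂ ∧ y₁ ≠ y₃ ∧ y₂ ≠ y₃ ∧
      (cellD d x y₁ ∩ cellD d x y₂).Nonempty ∧
      (cellD d x y₁ ∩ cellD d x y₃).Nonempty ∧
      (cellD d x y₂ ∩ cellD d x y₃).Nonempty := by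
  classical
  rintro ⟨y₁, y₂, y₃, h1, h2, h3, h12, h13, h23, ⟨ξa, hξa1, hξa2⟩, ⟨ξb, hξb1, hξb3⟩,
    ⟨ξc, hξc2, hξc3⟩⟩
  have key : ∀ ξ p q r, p ∈ x → q ∈ x → r ∈ x → p ≠ q → p ≠ r → q ≠ r →
      ξ ∈ cellD d x p → ξ ∈ cellD d x q → d p q < max (d p r) (d q r) := by
    intro ξ p q r hp hq hr hpq hpr hqr hcp hcq
    have heq : d ξ p = d ξ q := le_antisymm (hcp q hq) (hcq p hp)
    have hle : d ξ p ≤ d ξ r := hcp r hr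
    have hne : d ξ q ≠ d ξ r := fun h => hgp ξ p hp q hq r hr hpq hpr hqr ⟨heq, h⟩
    have hlt : d ξ p < d ξ r := lt_of_le_of_ne hle (heq ▸ hne)
    have h4 := four_point hT w hw d hd ξ r p q
    -- d ξ r + d p q ≤ max (d ξ p + d r q) (d ξ q + d r p)
    have hs1 : d r q = d q r := dsymm hT w hw d hd r q
    have hs2 : d r p = d p r := dsymm hT w hw d hd r p
    rcases le_max_iff.mp h4 with h | h
    · exact lt_max_of_lt_right (by linarith)
    · exact lt_max_of_lt_left (by linarith)
  have k12 := key ξa y₁ y₂ y₃ h1 h2 h3 h12 h13 h23 hξa1 hξa2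
  have k13 := key ξb y₁ y₃ y₂ h1 h3 h2 h13 h12 h23.symm hξb1 hξb3
  have k23 := key ξc y₂ y₃ y₁ h2 h3 h1 h23 h12.symm h13.symm hξc2 hξc3
  have s32 : d y₃ y₂ = d y₂ y₃ := dsymm hT w hw d hd y₃ y₂
  have s21 : d y₂ y₁ = d y₁ y₂ := dsymm hT w hw d hd y₂ y₁
  have s31 : d y₃ y₁ = d y₁ y₃ := dsymm hT w hw d hd y₃ y₁
  rw [s32] at k13
  rw [s21, s31] at k23
  rcases lt_max_iff.mp k12 with ha | ha <;> rcases lt_max_iff.mp k13 with hb | hb <;>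
    rcases lt_max_iff.mp k23 with hc | hc <;> linarith
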